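/- (Robustness of p-equivalence) For any regular language L over A, the following three conditions are equivalent: (1) μ(L) = 0; (2) μ*(L) = 0; (3) δ(L) = 0. -/

import Mathlib

open Filter
open Topology

/-- `mu L n` is the probability that a uniformly random string of length `n` lies in `L`. -/
noncomputable def mu {A : Type*} [Fintype A] (L : Set (List A)) (n : ℕ) : ℝ :=
  (Nat.card {s : List A // s.length = n ∧ s ∈ L} : ℝ) / (Fintype.card A : ℝ) ^ n

/-- Symmetric difference of two languages. -/
def sdiffL {A : Type*} (L₁ L₂ : Set (List A)) : Set (List A) := (L₁ \ L₂) ∪ (L₂ \ L₁)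

/-- `L₁ ≃_p L₂` : the probability of the symmetric difference tends to `0`. -/
def pEquiv {A : Type*} [Fintype A] (L₁ L₂ : Set (List A)) : Prop :=
  Filter.Tendsto (mu (sdiffL L₁ L₂)) Filter.atTop (nhds 0)

/-- A language is regular if it is accepted by a DFA with finitely many states. -/
def IsRegularLang {A : Type*} (L : Set (List A)) : Prop :=
  ∃ (σ : Type) (_ : Fintype σ) (M : DFA A σ), L = {s : List A | M.eval s ∈ M.accept}

/-- `muStar L n` : the probability that a uniformly random string of length `< n` lies in `L`. -/
noncomputable def muStar {A : Type*} [Fintype A] (L : Set (List A)) (n : ℕ) : ℝ :=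
  (Nat.card {s : List A // s.length < n ∧ s ∈ L} : ℝ) /
    (∑ k ∈ Finset.range n, (Fintype.card A : ℝ) ^ k)

/-- `delta L n` : the Cesàro mean `(1/n) ∑_{k=0}^{n-1} μ_k(L)`. -/
noncomputable def delta {A : Type*} [Fintype A] (L : Set (List A)) (n : ℕ) : ℝ :=
  (∑ k ∈ Finset.range n, mu L k) / n



section Count
variable {A : Type*} [Fintype A] {σ : Type*} [Fintype σ] (M : DFA A σ)

instance wordFinite' (n : ℕ) : Finite {w : List A // w.length = n} :=
  (List.finite_length_eq A n).to_subtype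

instance wordFinite (n : ℕ) (P : List A → Prop) : Finite {w : List A // w.length = n ∧ P w} :=
  ((List.finite_length_eq A n).subset (fun w hw => hw.1)).to_subtype

noncomputable def cntW (q : σ) (n : ℕ) (P : σ → Prop) : ℕ :=
  Nat.card {w : List A // w.length = n ∧ P (M.evalFrom q w)}

lemma nat_card_sigma {ι : Type*} [Fintype ι] (f : ι → Type*) [∀ i, Finite (f i)] :
    Nat.card (Σ i, f i) = ∑ i, Nat.card (f i) := by
  letI := fun i => Fintype.ofFinite (f i)
  simp [Nat.card_eq_fintype_card]

lemma evalFrom_append' (q : σ) (x y : List A) :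
    M.evalFrom q (x ++ y) = M.evalFrom (M.evalFrom q x) y := by
  simp [DFA.evalFrom, List.foldl_append]

lemma cntW_split (q : σ) (n m : ℕ) (P : σ → Prop) :
    cntW M q (n + m) P = ∑ g : σ, cntW M q n (· = g) * cntW M g m P := by
  classical
  have e : {w : List A // w.length = n + m ∧ P (M.evalFrom q w)} ≃
      Σ g : σ, {w : List A // w.length = n ∧ M.evalFrom q w = g} ×
        {u : List A // u.length = m ∧ P (M.evalFrom g u)} := by
    apply Equiv.symm
    apply Equiv.ofBijective (f := fun x => ⟨x.2.1.1 ++ x.2.2.1, by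
        simp [x.2.1.2.1, x.2.2.2.1], by
        rw [evalFrom_append', x.2.1.2.2]; exact x.2.2.2.2⟩)
    constructor
    · rintro ⟨g₁, ⟨w₁, h11, h12⟩, ⟨u₁, h13, h14⟩⟩ ⟨g₂, ⟨w₂, h21, h22⟩, ⟨u₂, h23, h24⟩⟩ h
      have hl : w₁ ++ u₁ = w₂ ++ u₂ := congrArg Subtype.val h
      obtain ⟨hw, hu⟩ := List.append_inj hl (h11.trans h21.symm)
      subst hw; subst hu; subst h12; subst h22; rfl
    · rintro ⟨w, hw, hP⟩
      refine ⟨⟨M.evalFrom q (w.take n), ⟨w.take n, by simp [hw], rfl⟩,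
        ⟨w.drop n, by simp [hw], ?_⟩⟩, ?_⟩
      · rw [← evalFrom_append', List.take_append_drop]; exact hP
      · exact Subtype.ext (List.take_append_drop n w)
  rw [cntW, Nat.card_congr e, nat_card_sigma]
  congr 1; funext g
  rw [Nat.card_prod]; rfl

open scoped Classical in
lemma cntW_zero (q : σ) (P : σ → Prop) :
    cntW M q 0 P = if P q then 1 else 0 := by
  classical
  split_ifs with h
  · haveI : Unique {w : List A // w.length = 0 ∧ P (M.evalFrom q w)} :=
      ⟨⟨⟨[], rfl, by simpa using h⟩⟩, by
        rintro ⟨w, hw, _⟩; exact Subtype.ext (List.length_eq_zero_iff.mp hw)⟩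
    exact Nat.card_unique
  · haveI : IsEmpty {w : List A // w.length = 0 ∧ P (M.evalFrom q w)} := ⟨by
      rintro ⟨w, hw, hp⟩
      rw [List.length_eq_zero_iff.mp hw] at hp
      simpa using h hp⟩
    exact Nat.card_of_isEmpty

lemma card_words (n : ℕ) : Nat.card {w : List A // w.length = n} = Fintype.card A ^ n := by
  have : Nat.card (List.Vector A n) = Fintype.card A ^ n := by
    rw [Nat.card_eq_fintype_card, card_vector]
  exact this

lemma cntW_all {q : σ} {n : ℕ} {P : σ → Prop} (h : ∀ w : List A, w.length = n → P (M.evalFrom q w)) :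
    cntW M q n P = Fintype.card A ^ n := by
  rw [cntW, Nat.card_congr (Equiv.subtypeEquivRight (q := fun w : List A => w.length = n)
    (fun w => ⟨fun hw => hw.1, fun hw => ⟨hw, h w hw⟩⟩)), card_words]

lemma cntW_mono {q : σ} {n : ℕ} {P Q : σ → Prop} (h : ∀ g, P g → Q g) :
    cntW M q n P ≤ cntW M q n Q :=
  Nat.card_le_card_of_injective (fun w => ⟨w.1, w.2.1, h _ w.2.2⟩)
    (by intro a b hab; simpa [Subtype.ext_iff] using hab)

lemma cntW_le (q : σ) (n : ℕ) (P : σ → Prop) : cntW M q n P ≤ Fintype.card A ^ n := by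
  rw [← cntW_all M (q := q) (n := n) (P := fun _ => True) (fun _ _ => trivial)]
  exact cntW_mono M (fun _ _ => trivial)

open scoped Classical in
lemma cntW_partition (q : σ) (n : ℕ) (P : σ → Prop) :
    cntW M q n P = ∑ g : σ, if P g then cntW M q n (· = g) else 0 := by
  classical
  have := cntW_split M q n 0 P
  simp only [Nat.add_zero] at this
  rw [this]
  congr 1; funext g
  rw [cntW_zero]
  split_ifs <;> simp

lemma cntW_sum_univ (q : σ) (n : ℕ) :
    ∑ g : σ, cntW M q n (· = g) = Fintype.card A ^ n := by
  classical
  have := cntW_partition M q n (fun _ => True)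
  simp only [if_true] at this
  rw [← this, cntW_all M (fun _ _ => trivial)]

end Count

section Reach
variable {A : Type*} [Fintype A] [Nonempty A] {σ : Type*} [Fintype σ] (M : DFA A σ)

def ReachM (q q' : σ) : Prop := ∃ w : List A, M.evalFrom q w = q'

lemma reach_refl (q : σ) : ReachM M q q := ⟨[], rfl⟩

lemma reach_trans {q q' q'' : σ} (h : ReachM M q q') (h' : ReachM M q' q'') : ReachM M q q'' := by
  obtain ⟨w, hw⟩ := h; obtain ⟨v, hv⟩ := h'
  exact ⟨w ++ v, by rw [evalFrom_append', hw, hv]⟩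

lemma reach_step (q : σ) (a : A) : ReachM M q (M.step q a) := ⟨[a], rfl⟩

lemma reach_evalFrom (q : σ) (w : List A) : ReachM M q (M.evalFrom q w) := ⟨w, rfl⟩

def RecM (q : σ) : Prop := ∀ q', ReachM M q q' → ReachM M q' q

lemma rec_evalFrom {q : σ} (h : RecM M q) (w : List A) : RecM M (M.evalFrom q w) := by
  intro q' hq'
  have h1 : ReachM M q q' := reach_trans M (reach_evalFrom M q w) hq'
  exact reach_trans M (h q' h1) (reach_evalFrom M q w)

lemma exists_reach_rec (q : σ) : ∃ r, ReachM M q r ∧ RecM M r := by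
  classical
  suffices H : ∀ k (q : σ), (Finset.univ.filter (ReachM M q ·)).card ≤ k →
      ∃ r, ReachM M q r ∧ RecM M r by
    exact H (Fintype.card σ) q (le_trans (Finset.card_filter_le _ _) (by simp))
  intro k
  induction k with
  | zero =>
    intro q hq
    have : q ∈ Finset.univ.filter (ReachM M q ·) := by simp [reach_refl]
    have := Finset.card_pos.mpr ⟨q, this⟩
    omega
  | succ k ih =>
    intro q hq
    by_cases hr : RecM M q
    · exact ⟨q, reach_refl M q, hr⟩
    · rw [RecM] at hr; push_neg at hr
      obtain ⟨q', hq', hnot⟩ := hr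
      obtain ⟨r, h1, h2⟩ := ih q' (by
        have hsub : Finset.univ.filter (ReachM M q' ·) ⊆ Finset.univ.filter (ReachM M q ·) := by
          intro x; simp only [Finset.mem_filter]
          exact fun hx => ⟨hx.1, reach_trans M hq' hx.2⟩
        have hne : q ∈ Finset.univ.filter (ReachM M q ·) := by simp [reach_refl]
        have hq'' : q ∉ Finset.univ.filter (ReachM M q' ·) := by simp [hnot]
        have := Finset.card_lt_card ((Finset.ssubset_iff_of_subset hsub).mpr ⟨q, hne, hq''⟩)
        omega)
      exact ⟨r, reach_trans M hq' h1, h2⟩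

lemma cntW_rec_zero {g : σ} (h : RecM M g) (m : ℕ) :
    cntW M g m (fun x => ¬ RecM M x) = 0 := by
  haveI : IsEmpty {w : List A // w.length = m ∧ ¬ RecM M (M.evalFrom g w)} :=
    ⟨by rintro ⟨w, hw, hp⟩; exact hp (rec_evalFrom M h w)⟩
  exact Nat.card_of_isEmpty

lemma cntW_pos_of_witness {g f : σ} {j : ℕ} (w : List A) (hw1 : w.length = j)
    (hw2 : M.evalFrom g w = f) : 1 ≤ cntW M g j (· = f) := by
  haveI : Nonempty {w : List A // w.length = j ∧ M.evalFrom g w = f} := ⟨⟨w, hw1, hw2⟩⟩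
  exact Nat.card_pos

lemma cntW_add_compl (q : σ) (n : ℕ) (P : σ → Prop) :
    cntW M q n P + cntW M q n (fun g => ¬ P g) = Fintype.card A ^ n := by
  classical
  rw [cntW_partition M q n P, cntW_partition M q n (fun g => ¬ P g), ← cntW_sum_univ M q n,
    ← Finset.sum_add_distrib]
  congr 1; funext g
  by_cases h : P g <;> simp [h]

lemma cntW_transient_le (q : σ) (n m : ℕ) (B : ℕ)
    (hB : ∀ g, ¬ RecM M g → cntW M g m (fun x => ¬ RecM M x) ≤ B) :
    cntW M q (n + m) (fun x => ¬ RecM M x) ≤ B * cntW M q n (fun x => ¬ RecM M x) := by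
  classical
  rw [cntW_split]
  calc ∑ g : σ, cntW M q n (· = g) * cntW M g m (fun x => ¬ RecM M x)
      ≤ ∑ g : σ, (if ¬ RecM M g then cntW M q n (· = g) * B else 0) := by
        apply Finset.sum_le_sum
        intro g _
        by_cases h : RecM M g
        · simp [h, cntW_rec_zero M h m]
        · simp only [h, not_false_iff, if_pos]
          exact Nat.mul_le_mul_left _ (hB g h)
    _ = B * cntW M q n (fun x => ¬ RecM M x) := by
        rw [cntW_partition M q n (fun x => ¬ RecM M x), Finset.mul_sum]
        congr 1; funext g
        by_cases h : RecM M g <;> simp [h, Nat.mul_comm]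

lemma exists_escape_time :
    ∃ t : ℕ, ∀ g : σ, cntW M g t (fun x => ¬ RecM M x) ≤ Fintype.card A ^ t - 1 := by
  classical
  have hch : ∀ g : σ, ∃ w : List A, RecM M (M.evalFrom g w) := by
    intro g
    obtain ⟨r, ⟨w, hw⟩, h2⟩ := exists_reach_rec M g
    exact ⟨w, hw ▸ h2⟩
  choose u hu using hch
  set t := Finset.univ.sup (fun g => (u g).length) with ht
  refine ⟨t, fun g => ?_⟩
  have hlen : (u g).length ≤ t := ht ▸ Finset.le_sup (f := fun g => (u g).length) (Finset.mem_univ g)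
  set a₀ : A := Classical.arbitrary A
  have hrec1 : 1 ≤ cntW M g t (RecM M) := by
    haveI : Nonempty {w : List A // w.length = t ∧ RecM M (M.evalFrom g w)} := by
      refine ⟨⟨u g ++ List.replicate (t - (u g).length) a₀, by simp; omega, ?_⟩⟩
      rw [evalFrom_append']
      exact rec_evalFrom M (hu g) _
    exact Nat.card_pos
  have := cntW_add_compl M g t (RecM M)
  omega

end Reach

section Dyn
variable {A : Type*} [Fintype A] [Nonempty A] {σ : Type*} [Fintype σ] (M : DFA A σ)

noncomputable def ptrans (n : ℕ) : ℝ :=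
  (cntW M M.start n (fun x => ¬ RecM M x) : ℝ) / (Fintype.card A : ℝ) ^ n

lemma ptrans_nonneg (n : ℕ) : 0 ≤ ptrans M n := by
  rw [ptrans]; positivity

lemma tendsto_ptrans : Tendsto (ptrans M) atTop (𝓝 0) := by
  have hK : (0:ℝ) < (Fintype.card A : ℝ) := by exact_mod_cast Fintype.card_pos
  have hanti : Antitone (ptrans M) := antitone_nat_of_succ_le (fun n => by
    have h1 : cntW M M.start (n+1) (fun x => ¬ RecM M x) ≤
        Fintype.card A * cntW M M.start n (fun x => ¬ RecM M x) :=
      cntW_transient_le M _ n 1 (Fintype.card A) (fun g _ => by simpa using cntW_le M g 1 _)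
    have h2 : (cntW M M.start (n+1) (fun x => ¬ RecM M x) : ℝ) ≤
        (Fintype.card A : ℝ) * (cntW M M.start n (fun x => ¬ RecM M x) : ℝ) := by
      exact_mod_cast h1
    rw [ptrans, ptrans]
    rw [div_le_div_iff₀ (by positivity) (by positivity)]
    rw [pow_succ]
    nlinarith [Nat.cast_nonneg (α := ℝ) (cntW M M.start (n+1) (fun x => ¬ RecM M x)),
      pow_pos hK n, Nat.cast_nonneg (α := ℝ) (cntW M M.start n (fun x => ¬ RecM M x))])
  obtain ⟨t, ht⟩ := exists_escape_time M
  set ε : ℝ := ((Fintype.card A : ℝ) ^ t)⁻¹ with hεdef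
  have hε : 0 < ε := by positivity
  have hε1 : ε ≤ 1 := by
    rw [hεdef]
    apply inv_le_one_of_one_le₀
    exact_mod_cast Nat.one_le_pow t _ Fintype.card_pos
  have hcontr : ∀ n, ptrans M (n + t) ≤ (1 - ε) * ptrans M n := by
    intro n
    have h1 : cntW M M.start (n+t) (fun x => ¬ RecM M x) ≤
        (Fintype.card A ^ t - 1) * cntW M M.start n (fun x => ¬ RecM M x) :=
      cntW_transient_le M _ n t _ (fun g _ => ht g)
    have hKt : 1 ≤ Fintype.card A ^ t := Nat.one_le_pow _ _ Fintype.card_pos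
    have h2 : (cntW M M.start (n+t) (fun x => ¬ RecM M x) : ℝ) ≤
        ((Fintype.card A : ℝ) ^ t - 1) * (cntW M M.start n (fun x => ¬ RecM M x) : ℝ) := by
      have := h1
      have hcast : ((Fintype.card A ^ t - 1 : ℕ) : ℝ) = (Fintype.card A : ℝ) ^ t - 1 := by
        push_cast [Nat.cast_sub hKt]; ring
      calc (cntW M M.start (n+t) (fun x => ¬ RecM M x) : ℝ)
          ≤ ((Fintype.card A ^ t - 1) * cntW M M.start n (fun x => ¬ RecM M x) : ℕ) := by
            exact_mod_cast h1
        _ = _ := by push_cast [Nat.cast_sub hKt]; ring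
    calc ptrans M (n + t)
        = (cntW M M.start (n+t) (fun x => ¬ RecM M x) : ℝ) / (Fintype.card A : ℝ) ^ (n+t) := rfl
      _ ≤ (((Fintype.card A : ℝ)^t - 1) * (cntW M M.start n (fun x => ¬ RecM M x) : ℝ))
            / (Fintype.card A : ℝ) ^ (n+t) := by gcongr
      _ = (1 - ε) * ptrans M n := by
          have h4 : ((Fintype.card A : ℝ))^t ≠ 0 := by positivity
          have h6 : (1 - ((Fintype.card A:ℝ)^t)⁻¹)
              = ((Fintype.card A:ℝ)^t - 1)/(Fintype.card A:ℝ)^t := by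
            rw [sub_div, div_self h4, one_div]
          rw [ptrans, hεdef, h6, div_mul_div_comm, pow_add,
            mul_comm ((Fintype.card A:ℝ)^t) ((Fintype.card A:ℝ)^n)]
  have hbdd : BddBelow (Set.range (ptrans M)) := ⟨0, by rintro x ⟨n, rfl⟩; exact ptrans_nonneg M n⟩
  have hlim := tendsto_atTop_ciInf hanti hbdd
  set l := ⨅ n, ptrans M n with hldef
  have hl0 : 0 ≤ l := le_ciInf (fun n => ptrans_nonneg M n)
  have h2 : Tendsto (fun n => ptrans M (n + t)) atTop (𝓝 l) := hlim.comp (tendsto_add_atTop_nat t)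
  have h3 : Tendsto (fun n => (1 - ε) * ptrans M n) atTop (𝓝 ((1-ε)*l)) := hlim.const_mul _
  have hle : l ≤ (1-ε) * l := le_of_tendsto_of_tendsto' h2 h3 hcontr
  have hl : l = 0 := by nlinarith
  rwa [hl] at hlim

end Dyn

section Main
variable {A : Type*} [Fintype A] [Nonempty A] {σ : Type*} [Fintype σ] (M : DFA A σ)

lemma mu_nonneg (L : Set (List A)) (n : ℕ) : 0 ≤ mu L n := by
  rw [mu]; positivity

lemma mu_eq_cntW (n : ℕ) :
    mu {s : List A | M.eval s ∈ M.accept} n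
      = (cntW M M.start n (· ∈ M.accept) : ℝ) / (Fintype.card A : ℝ) ^ n := rfl

lemma rec_accept_cnt_zero
    (hδ : Tendsto (delta {s : List A | M.eval s ∈ M.accept}) atTop (𝓝 0))
    {f : σ} (hf : f ∈ M.accept) (hrecf : RecM M f) (N : ℕ) :
    cntW M M.start N (· = f) = 0 := by
  classical
  set L := {s : List A | M.eval s ∈ M.accept} with hLdef
  set K := Fintype.card A with hKdef
  by_contra hc
  have hc1 : 1 ≤ cntW M M.start N (· = f) := Nat.one_le_iff_ne_zero.mpr hc
  have hv : ∀ g : σ, ∃ w : List A, ReachM M g f → M.evalFrom g w = f := by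
    intro g
    by_cases h : ReachM M g f
    · obtain ⟨w, hw⟩ := h; exact ⟨w, fun _ => hw⟩
    · exact ⟨[], fun h' => absurd h' h⟩
  choose v hvv using hv
  set a₀ : A := Classical.arbitrary A with ha₀
  set w : σ → List A := fun g => a₀ :: v (M.step g a₀) with hwdef
  have hwlen : ∀ g, 1 ≤ (w g).length := fun g => by simp [hwdef]
  have hwf : ∀ g, ReachM M f g → M.evalFrom g (w g) = f := by
    intro g hg
    have h1 : ReachM M f (M.step g a₀) := reach_trans M hg (reach_step M g a₀)
    have h2 : ReachM M (M.step g a₀) f := hrecf _ h1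
    exact hvv _ h2
  set t := Finset.univ.sup (fun g => (w g).length) with htdef
  have hwt : ∀ g, (w g).length ≤ t :=
    fun g => htdef ▸ Finset.le_sup (f := fun g => (w g).length) (Finset.mem_univ g)
  have ht1 : 1 ≤ t := le_trans (hwlen f) (hwt f)
  -- block bound (nat)
  have hblock : ∀ m : ℕ, cntW M M.start m (ReachM M f) ≤
      ∑ j ∈ Finset.Icc 1 t, cntW M M.start (m + j) (· = f) * K ^ (t - j) := by
    intro m
    calc cntW M M.start m (ReachM M f)
        = ∑ g : σ, if ReachM M f g then cntW M M.start m (· = g) else 0 := by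
          rw [cntW_partition]
      _ ≤ ∑ g : σ, cntW M M.start m (· = g) *
            (∑ j ∈ Finset.Icc 1 t, cntW M g j (· = f) * K ^ (t - j)) := by
          apply Finset.sum_le_sum
          intro g _
          by_cases h : ReachM M f g
          · rw [if_pos h]
            have hmem : (w g).length ∈ Finset.Icc 1 t := by
              rw [Finset.mem_Icc]; exact ⟨hwlen g, hwt g⟩
            have hwit := cntW_pos_of_witness M (w g) rfl (hwf g h)
            have hK' : 1 ≤ K ^ (t - (w g).length) := Nat.one_le_pow _ _ Fintype.card_pos
            have h1 : 1 ≤ ∑ j ∈ Finset.Icc 1 t, cntW M g j (· = f) * K ^ (t - j) :=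
              le_trans (le_trans (by norm_num) (Nat.mul_le_mul hwit hK'))
                (Finset.single_le_sum (f := fun j => cntW M g j (· = f) * K ^ (t - j)) (fun j _ => Nat.zero_le _) hmem)
            calc cntW M M.start m (· = g) = cntW M M.start m (· = g) * 1 := by ring
              _ ≤ _ := Nat.mul_le_mul_left _ h1
          · rw [if_neg h]; exact Nat.zero_le _
      _ = ∑ j ∈ Finset.Icc 1 t, cntW M M.start (m + j) (· = f) * K ^ (t - j) := by
          simp only [cntW_split M M.start m _ (· = f), Finset.sum_mul, Finset.mul_sum, mul_assoc]
          rw [Finset.sum_comm]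
  -- mass growth
  have hCcl : ∀ u : List A, ReachM M f (M.evalFrom f u) := fun u => reach_evalFrom M f u
  have hmass : ∀ i : ℕ, K ^ i ≤ cntW M M.start (N + i) (ReachM M f) := by
    intro i
    rw [cntW_split M _ N i]
    calc K ^ i = 1 * K ^ i := (one_mul _).symm
      _ ≤ cntW M M.start N (· = f) * cntW M f i (ReachM M f) := by
          rw [cntW_all M (fun u _ => hCcl u)]
          exact Nat.mul_le_mul_right _ hc1
      _ ≤ _ := Finset.single_le_sum (f := fun g => cntW M M.start N (· = g) * cntW M g i (ReachM M f))
            (fun g _ => Nat.zero_le _) (Finset.mem_univ f)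
  -- real block lower bound
  have hKr : (0:ℝ) < (K : ℝ) := by exact_mod_cast Fintype.card_pos
  set β : ℝ := 1 / (K:ℝ) ^ (N + t) with hβdef
  have hβ : 0 < β := by rw [hβdef]; positivity
  have hSi : ∀ i : ℕ, β ≤ ∑ j ∈ Finset.Icc 1 t, mu L (N + i + j) := by
    intro i
    have h1 : ((K:ℝ))^i ≤ ∑ j ∈ Finset.Icc 1 t,
        (cntW M M.start (N + i + j) (· = f) : ℝ) * (K:ℝ) ^ (t - j) := by
      have := le_trans (hmass i) (hblock (N + i))
      calc ((K:ℝ))^i = ((K ^ i : ℕ) : ℝ) := by push_cast; ring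
        _ ≤ ((∑ j ∈ Finset.Icc 1 t, cntW M M.start (N + i + j) (· = f) * K ^ (t - j) : ℕ) : ℝ) := by
            exact_mod_cast this
        _ = _ := by push_cast; ring
    have h2 : ∀ j ∈ Finset.Icc 1 t,
        (cntW M M.start (N + i + j) (· = f) : ℝ) * (K:ℝ) ^ (t - j)
          ≤ mu L (N + i + j) * (K:ℝ) ^ (N + i + t) := by
      intro j hj
      have hj' : j ≤ t := (Finset.mem_Icc.mp hj).2
      have hmono : cntW M M.start (N+i+j) (· = f) ≤ cntW M M.start (N+i+j) (· ∈ M.accept) :=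
        cntW_mono M (fun g hg => hg ▸ hf)
      have hpow : (K:ℝ) ^ (N + i + t) = (K:ℝ) ^ (N + i + j) * (K:ℝ) ^ (t - j) := by
        rw [← pow_add]; congr 1; omega
      have hKne : ((K:ℝ)) ^ (N + i + j) ≠ 0 := by positivity
      have hrhs : mu L (N + i + j) * (K:ℝ) ^ (N + i + t)
          = (cntW M M.start (N+i+j) (· ∈ M.accept) : ℝ) * (K:ℝ) ^ (t - j) := by
        rw [hLdef, mu_eq_cntW, hpow, ← hKdef, div_mul_eq_mul_div,
          mul_comm ((K:ℝ) ^ (N + i + j)) ((K:ℝ) ^ (t - j)), ← mul_assoc,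
          mul_div_assoc, div_self hKne, mul_one]
      rw [hrhs]
      exact mul_le_mul_of_nonneg_right (by exact_mod_cast hmono) (by positivity)
    have h3 : ((K:ℝ))^i ≤ (∑ j ∈ Finset.Icc 1 t, mu L (N + i + j)) * (K:ℝ) ^ (N + i + t) := by
      rw [Finset.sum_mul]
      exact le_trans h1 (Finset.sum_le_sum h2)
    have h4 : (K:ℝ) ^ (N + i + t) = (K:ℝ)^i * (K:ℝ)^(N+t) := by
      rw [← pow_add]; congr 1; omega
    rw [hβdef, div_le_iff₀ (by positivity)]
    rw [h4] at h3
    have hKi : (0:ℝ) < (K:ℝ)^i := by positivity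
    nlinarith [Finset.sum_nonneg (fun j (_ : j ∈ Finset.Icc 1 t) => mu_nonneg L (N + i + j))]
  -- accumulate blocks
  have hsum : ∀ r : ℕ, (r:ℝ) * β ≤ ∑ k ∈ Finset.range (N + 1 + r * t), mu L k := by
    intro r
    induction r with
    | zero => simpa using Finset.sum_nonneg (fun k _ => mu_nonneg L k)
    | succ r ih =>
      have hm : N + 1 + (r+1) * t = (N + 1 + r * t) + t := by ring
      rw [hm]
      have hsplit : ∑ k ∈ Finset.range ((N + 1 + r * t) + t), mu L k
          = ∑ k ∈ Finset.range (N + 1 + r * t), mu L k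
            + ∑ k ∈ Finset.Ico (N + 1 + r * t) ((N + 1 + r * t) + t), mu L k := by
        rw [Finset.range_eq_Ico,
          ← Finset.sum_Ico_consecutive _ (Nat.zero_le _) (Nat.le_add_right _ _), ← Finset.range_eq_Ico]
      have hico : ∑ k ∈ Finset.Ico (N + 1 + r * t) ((N + 1 + r * t) + t), mu L k
          = ∑ j ∈ Finset.Icc 1 t, mu L (N + r * t + j) := by
        rw [show Finset.Icc 1 t = Finset.Ico 1 (t+1) from rfl]
        rw [Finset.sum_Ico_eq_sum_range, Finset.sum_Ico_eq_sum_range]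
        apply Finset.sum_congr
        · congr 1; omega
        · intro j _; congr 1; omega
      have hblk : β ≤ ∑ k ∈ Finset.Ico (N + 1 + r * t) ((N + 1 + r * t) + t), mu L k := by
        rw [hico]; exact hSi (r * t)
      rw [hsplit]
      push_cast
      linarith
  -- contradiction
  have htr : (0:ℝ) < t := by exact_mod_cast ht1
  set ε : ℝ := β / (2 * t) with hεdef
  have hε : 0 < ε := by rw [hεdef]; positivity
  rw [Metric.tendsto_atTop] at hδ
  obtain ⟨n₀, hn₀⟩ := hδ ε hε
  set r := max (N + 1) n₀ with hrdef
  set n := N + 1 + r * t with hndef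
  have hrt : r ≤ r * t := Nat.le_mul_of_pos_right r ht1
  have hrn : n₀ ≤ n := by
    have : n₀ ≤ r := le_max_right _ _
    omega
  have h1 := hn₀ n hrn
  rw [Real.dist_eq, sub_zero] at h1
  have h2 : (r:ℝ) * β ≤ ∑ k ∈ Finset.range n, mu L k := hsum r
  have hn_pos : (0:ℝ) < (n:ℝ) := by
    have : 1 ≤ n := by omega
    exact_mod_cast Nat.lt_of_lt_of_le Nat.zero_lt_one this
  have h4 : (r:ℝ) * β / (n:ℝ) ≤ delta L n := by
    rw [delta]
    gcongr
  have hn2rt : (n:ℝ) ≤ 2 * (r:ℝ) * (t:ℝ) := by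
    have hN1r : N + 1 ≤ r := le_max_left _ _
    have : n ≤ 2 * (r * t) := by omega
    calc (n:ℝ) ≤ ((2 * (r * t) : ℕ) : ℝ) := by exact_mod_cast this
      _ = 2 * (r:ℝ) * (t:ℝ) := by push_cast; ring
  have hrpos : (0:ℝ) < (r:ℝ) := by
    have : 1 ≤ r := le_trans (by omega) (le_max_left (N+1) n₀)
    exact_mod_cast Nat.lt_of_lt_of_le Nat.zero_lt_one this
  have h5 : ε ≤ (r:ℝ) * β / (n:ℝ) := by
    rw [hεdef, div_le_div_iff₀ (by positivity) hn_pos]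
    nlinarith
  have h6 : delta L n < ε := lt_of_abs_lt h1
  linarith

lemma delta_to_mu
    (hδ : Tendsto (delta {s : List A | M.eval s ∈ M.accept}) atTop (𝓝 0)) :
    Tendsto (mu {s : List A | M.eval s ∈ M.accept}) atTop (𝓝 0) := by
  classical
  have hcnt : ∀ n, cntW M M.start n (· ∈ M.accept) ≤
      cntW M M.start n (fun g => ¬ RecM M g) := by
    intro n
    rw [cntW_partition M M.start n (· ∈ M.accept),
      cntW_partition M M.start n (fun g => ¬ RecM M g)]
    apply Finset.sum_le_sum
    intro g _
    by_cases h1 : g ∈ M.accept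
    · by_cases h2 : RecM M g
      · simp [h1, h2, rec_accept_cnt_zero M hδ h1 h2 n]
      · simp [h1, h2]
    · simp [h1]
  apply squeeze_zero (fun n => mu_nonneg _ n) _ (tendsto_ptrans M)
  intro n
  rw [mu_eq_cntW, ptrans]
  gcongr
  exact_mod_cast hcnt n

end Main

section Analytic
variable {A : Type*} [Fintype A] [Nonempty A]

lemma tendsto_weighted_avg {f w : ℕ → ℝ} (hf0 : ∀ k, 0 ≤ f k) (hf1 : ∀ k, f k ≤ 1)
    (hw : ∀ k, 1 ≤ w k) (hf : Tendsto f atTop (𝓝 0)) :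
    Tendsto (fun n => (∑ k ∈ Finset.range n, f k * w k) / (∑ k ∈ Finset.range n, w k))
      atTop (𝓝 0) := by
  have hw0 : ∀ k, (0:ℝ) ≤ w k := fun k => le_trans zero_le_one (hw k)
  have hwpos : ∀ n, (0:ℝ) ≤ ∑ k ∈ Finset.range n, w k :=
    fun n => Finset.sum_nonneg (fun k _ => hw0 k)
  have hWn : ∀ n : ℕ, (n:ℝ) ≤ ∑ k ∈ Finset.range n, w k := by
    intro n
    calc (n:ℝ) = ∑ _k ∈ Finset.range n, (1:ℝ) := by simp
      _ ≤ _ := Finset.sum_le_sum (fun k _ => hw k)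
  rw [Metric.tendsto_atTop]
  intro ε hε
  rw [Metric.tendsto_atTop] at hf
  obtain ⟨N₁, hN₁⟩ := hf (ε/2) (by positivity)
  set C : ℝ := ∑ k ∈ Finset.range N₁, w k with hC
  have hC0 : 0 ≤ C := hwpos N₁
  obtain ⟨N₂, hN₂⟩ := exists_nat_gt (2 * C / ε)
  refine ⟨max N₁ N₂ + 1, fun n hn => ?_⟩
  have hnN₁ : N₁ ≤ n := le_trans (le_trans (le_max_left _ _) (Nat.le_succ _)) hn
  have hnN₂ : 2 * C / ε < (n:ℝ) :=
    lt_of_lt_of_le hN₂ (by exact_mod_cast le_trans (le_trans (le_max_right _ _) (Nat.le_succ _)) hn)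
  have hnpos : (0:ℝ) < (n:ℝ) := by
    have h1 : 1 ≤ n := le_trans (Nat.le_add_left 1 _) hn
    exact_mod_cast h1
  have hWpos : (0:ℝ) < ∑ k ∈ Finset.range n, w k := lt_of_lt_of_le hnpos (hWn n)
  have hnum0 : 0 ≤ ∑ k ∈ Finset.range n, f k * w k :=
    Finset.sum_nonneg (fun k _ => mul_nonneg (hf0 k) (hw0 k))
  rw [Real.dist_eq, sub_zero, abs_of_nonneg (div_nonneg hnum0 (hwpos n)), div_lt_iff₀ hWpos]
  have hsplit : ∑ k ∈ Finset.range n, f k * w k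
      = ∑ k ∈ Finset.range N₁, f k * w k + ∑ k ∈ Finset.Ico N₁ n, f k * w k := by
    rw [Finset.range_eq_Ico, ← Finset.sum_Ico_consecutive _ (Nat.zero_le _) hnN₁, ← Finset.range_eq_Ico]
  have h1 : ∑ k ∈ Finset.range N₁, f k * w k ≤ C := by
    rw [hC]
    exact Finset.sum_le_sum (fun k _ => by nlinarith [hf0 k, hf1 k, hw0 k])
  have h2 : ∑ k ∈ Finset.Ico N₁ n, f k * w k ≤ ε/2 * ∑ k ∈ Finset.range n, w k := by
    calc ∑ k ∈ Finset.Ico N₁ n, f k * w k ≤ ∑ k ∈ Finset.Ico N₁ n, ε/2 * w k := by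
          apply Finset.sum_le_sum
          intro k hk
          have hk' : N₁ ≤ k := (Finset.mem_Ico.mp hk).1
          have := hN₁ k hk'
          rw [Real.dist_eq, sub_zero] at this
          have hfk : f k ≤ ε/2 := le_of_lt (lt_of_abs_lt this)
          nlinarith [hw0 k]
      _ ≤ ε/2 * ∑ k ∈ Finset.range n, w k := by
          rw [← Finset.mul_sum]
          apply mul_le_mul_of_nonneg_left _ (by positivity)
          apply Finset.sum_le_sum_of_subset_of_nonneg
          · rw [Finset.range_eq_Ico]; exact Finset.Ico_subset_Ico (Nat.zero_le _) le_rfl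
          · intro k _ _; exact hw0 k
  have hClt : C < ε/2 * (n:ℝ) := by
    rw [div_lt_iff₀ hε] at hnN₂
    linarith
  have hWn' := hWn n
  calc ∑ k ∈ Finset.range n, f k * w k ≤ C + ε/2 * ∑ k ∈ Finset.range n, w k := by
        rw [hsplit]; linarith
    _ < ε/2 * (n:ℝ) + ε/2 * ∑ k ∈ Finset.range n, w k := by linarith
    _ ≤ ε * ∑ k ∈ Finset.range n, w k := by nlinarith
  done

lemma card_lt_split (L : Set (List A)) (n : ℕ) :
    Nat.card {s : List A // s.length < n ∧ s ∈ L}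
      = ∑ k ∈ Finset.range n, Nat.card {s : List A // s.length = k ∧ s ∈ L} := by
  have e : {s : List A // s.length < n ∧ s ∈ L}
      ≃ Σ k : Fin n, {s : List A // s.length = (k:ℕ) ∧ s ∈ L} :=
    { toFun := fun s => ⟨⟨s.1.length, s.2.1⟩, ⟨s.1, rfl, s.2.2⟩⟩
      invFun := fun x => ⟨x.2.1, by rw [x.2.2.1]; exact x.1.2, x.2.2.2⟩
      left_inv := fun s => rfl
      right_inv := fun x => by
        rcases x with ⟨⟨k, hk⟩, ⟨s, hs1, hs2⟩⟩
        simp only [Fin.val_mk] at hs1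
        subst hs1
        rfl }
  rw [Nat.card_congr e, nat_card_sigma]
  exact Fin.sum_univ_eq_sum_range (fun k => Nat.card {s : List A // s.length = k ∧ s ∈ L}) n

lemma muStar_eq (L : Set (List A)) (n : ℕ) :
    muStar L n = (∑ k ∈ Finset.range n, mu L k * (Fintype.card A : ℝ)^k)
      / (∑ k ∈ Finset.range n, (Fintype.card A : ℝ)^k) := by
  have hK0 : (0:ℝ) < (Fintype.card A : ℝ) := by exact_mod_cast Fintype.card_pos
  rw [muStar]
  congr 1
  rw [card_lt_split L n]
  push_cast
  apply Finset.sum_congr rfl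
  intro k _
  rw [mu, div_mul_cancel₀]
  positivity

lemma mu_le_one (L : Set (List A)) (n : ℕ) : mu L n ≤ 1 := by
  have hK0 : (0:ℝ) < (Fintype.card A : ℝ) := by exact_mod_cast Fintype.card_pos
  rw [mu, div_le_one (by positivity)]
  calc (Nat.card {s : List A // s.length = n ∧ s ∈ L} : ℝ)
      ≤ (Nat.card {w : List A // w.length = n} : ℝ) := by
        exact_mod_cast Nat.card_le_card_of_injective
          (fun s : {s : List A // s.length = n ∧ s ∈ L} =>
            (⟨s.1, s.2.1⟩ : {w : List A // w.length = n}))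
          (by intro a b hab; simpa [Subtype.ext_iff] using hab)
    _ = (Fintype.card A : ℝ)^n := by exact_mod_cast card_words (A := A) n
end Analytic

theorem robustness_of_pEquiv {A : Type*} [Fintype A] [Nonempty A] (L : Set (List A))
    (hL : IsRegularLang L) :
    [Filter.Tendsto (mu L) Filter.atTop (nhds (0 : ℝ)),
     Filter.Tendsto (muStar L) Filter.atTop (nhds (0 : ℝ)),
     Filter.Tendsto (delta L) Filter.atTop (nhds (0 : ℝ))].TFAE := by
  classical
  obtain ⟨σ, iσ, M, rfl⟩ := hL
  haveI := iσ
  set L : Set (List A) := {s : List A | M.eval s ∈ M.accept} with hLdef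
  have hK0 : (0:ℝ) < (Fintype.card A : ℝ) := by exact_mod_cast Fintype.card_pos
  tfae_have 1 → 2 := by
    intro h1
    have hwa := tendsto_weighted_avg (f := mu L) (w := fun k => (Fintype.card A : ℝ)^k)
      (mu_nonneg L) (mu_le_one L)
      (fun k => one_le_pow₀ (by exact_mod_cast Fintype.card_pos : (1:ℝ) ≤ (Fintype.card A : ℝ))) h1
    exact Tendsto.congr (fun n => (muStar_eq L n).symm) hwa
  tfae_have 2 → 3 := by
    intro h2
    rcases Nat.lt_or_ge (Fintype.card A) 2 with hA | hA
    · have hA1 : Fintype.card A = 1 := by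
        have := Fintype.card_pos (α := A); omega
      have heq : ∀ n, delta L n = muStar L n := by
        intro n
        rw [delta, muStar_eq, hA1]
        simp
      exact Tendsto.congr (fun n => (heq n).symm) h2
    · have hK2 : (2:ℝ) ≤ (Fintype.card A : ℝ) := by exact_mod_cast hA
      set K : ℝ := (Fintype.card A : ℝ) with hKdef
      have hK1 : (0:ℝ) < K - 1 := by linarith
      have hmu : Tendsto (mu L) atTop (𝓝 0) := by
        have hbound : ∀ n, mu L n ≤ muStar L (n+1) * (K/(K-1)) := by
          intro n
          have hW : ∑ k ∈ Finset.range (n+1), K^k = (K^(n+1) - 1)/(K - 1) :=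
            geom_sum_eq (by linarith) (n+1)
          have hWpos : (0:ℝ) < ∑ k ∈ Finset.range (n+1), K^k :=
            Finset.sum_pos (fun k _ => pow_pos hK0 k) (Finset.nonempty_range_add_one)
          have hWle : ∑ k ∈ Finset.range (n+1), K^k ≤ K^(n+1)/(K-1) := by
            rw [hW]
            gcongr
            linarith [pow_pos hK0 (n+1)]
          have h1 : mu L n * K^n ≤ ∑ k ∈ Finset.range (n+1), mu L k * K^k :=
            Finset.single_le_sum (f := fun k => mu L k * K^k)
              (fun k _ => mul_nonneg (mu_nonneg L k) (le_of_lt (pow_pos hK0 k)))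
              (Finset.self_mem_range_succ n)
          have h2' : (mu L n * K^n) / (∑ k ∈ Finset.range (n+1), K^k) ≤ muStar L (n+1) := by
            rw [muStar_eq]
            gcongr
          have h3 : (mu L n * K^n) / (K^(n+1)/(K-1))
              ≤ (mu L n * K^n) / (∑ k ∈ Finset.range (n+1), K^k) :=
            div_le_div_of_nonneg_left
              (mul_nonneg (mu_nonneg L n) (le_of_lt (pow_pos hK0 n))) hWpos hWle
          have hid2 : (mu L n * K^n) / (K^(n+1)/(K-1)) = mu L n * ((K-1)/K) := by
            rw [pow_succ]
            have h4 : K^n ≠ 0 := by positivity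
            have h5 : K ≠ 0 := by positivity
            field_simp
          have key : mu L n * ((K-1)/K) ≤ muStar L (n+1) := by
            rw [← hid2]; exact le_trans h3 h2'
          have hid : (mu L n * ((K-1)/K)) * (K/(K-1)) = mu L n := by
            field_simp
          calc mu L n = (mu L n * ((K-1)/K)) * (K/(K-1)) := hid.symm
            _ ≤ muStar L (n+1) * (K/(K-1)) := by
                apply mul_le_mul_of_nonneg_right key
                positivity
        apply squeeze_zero (mu_nonneg L) hbound
        have hcomp : Tendsto (fun n => muStar L (n+1)) atTop (𝓝 0) :=
          h2.comp (tendsto_add_atTop_nat 1)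
        have := hcomp.mul_const (K/(K-1))
        simpa using this
      have hc := hmu.cesaro
      exact Tendsto.congr (fun n => by simp [delta, smul_eq_mul, div_eq_inv_mul]) hc
  tfae_have 3 → 1 := delta_to_mu M
  tfae_finish
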